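/- Let q^b be a square, V' = F_{q^b}^n with the Hermitian form κ'(x,y) = Σ_i x_i y_i^{q^{b/2}} and H'(x) = κ'(x,x) ∈ F_{q^{b/2}}. Suppose n is odd. Then for every a ∈ F_{q^{b/2}}^*, the number of vectors x ∈ V' with H'(x) = a equals q^{(bn−b)/2}(q^{bn/2}+1), where d = bn. -/

import Mathlib

open Finset

namespace Stmt7

variable {E : Type*} [Field E] [Fintype E] [DecidableEq E] {r : ℕ}

/-- Number of vectors in `E^n` of Hermitian norm `a`. -/
def N (r : ℕ) (E : Type*) [Field E] [Fintype E] [DecidableEq E] (n : ℕ) (a : E) : ℕ :=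
  (univ.filter fun x : Fin n → E => (∑ i, x i ^ (r+1)) = a).card

/-- The nonzero elements of the subfield `F_r`. -/
def S (r : ℕ) (E : Type*) [Field E] [Fintype E] [DecidableEq E] : Finset E :=
  univ.filter fun c : E => c ≠ 0 ∧ c ^ r = c

/-- fibers of the norm map -/
def F (r : ℕ) (E : Type*) [Field E] [Fintype E] [DecidableEq E] (c : E) : ℕ :=
  (univ.filter fun t : E => t ^ (r+1) = c).card

lemma mem_S {c : E} : c ∈ S r E ↔ c ≠ 0 ∧ c ^ r = c := by
  simp [S]

lemma frob_add (hcard : Fintype.card E = r ^ 2) (x y : E) :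
    (x + y) ^ r = x ^ r + y ^ r := by
  cases CharP.exists E with
  | intro p hp =>
    have hprime : p.Prime := CharP.char_is_prime E p
    obtain ⟨k, -, hk⟩ := FiniteField.card E p
    have hdvd : r ∣ p ^ (k : ℕ) := by
      rw [← hk, hcard]; exact dvd_pow_self r two_ne_zero
    obtain ⟨m, -, rfl⟩ := (Nat.dvd_prime_pow hprime).mp hdvd
    haveI : Fact p.Prime := ⟨hprime⟩
    exact add_pow_char_pow x y p m

lemma frob_sub (hcard : Fintype.card E = r ^ 2) (x y : E) :
    (x - y) ^ r = x ^ r - y ^ r := by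
  have h := frob_add hcard (x - y) y
  rw [sub_add_cancel] at h
  rw [eq_sub_iff_add_eq]; exact h.symm

lemma frob_sum (hcard : Fintype.card E = r ^ 2) {ι : Type*} (s : Finset ι) (f : ι → E) :
    (∑ i ∈ s, f i) ^ r = ∑ i ∈ s, f i ^ r := by
  classical
  induction s using Finset.induction with
  | empty =>
    simp only [sum_empty]
    have h := frob_add hcard (0 : E) 0
    simpa using h
  | insert _ _ hx ih =>
    rw [sum_insert hx, sum_insert hx, frob_add hcard, ih]

lemma pow_sq (hcard : Fintype.card E = r ^ 2) (x : E) : x ^ (r * r) = x := by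
  have := FiniteField.pow_card x (K := E)
  rwa [hcard, pow_two] at this

/-- The norm lands in the subfield. -/
lemma norm_fixed (hcard : Fintype.card E = r ^ 2) (t : E) :
    (t ^ (r+1)) ^ r = t ^ (r+1) := by
  rw [← pow_mul]
  have : (r + 1) * r = r * r + r := by ring
  rw [this, pow_add, pow_sq hcard, pow_succ]; ring

/-- Fiber bound: at most `m` elements with `t ^ m = c`. -/
lemma fiber_le (m : ℕ) (hm : 0 < m) (c : E) :
    (univ.filter fun t : E => t ^ m = c).card ≤ m := by
  have h1 : (univ.filter fun t : E => t ^ m = c) ⊆ (Polynomial.nthRoots m c).toFinset := by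
    intro t ht
    simp only [mem_filter, mem_univ, true_and] at ht
    rw [Multiset.mem_toFinset, Polynomial.mem_nthRoots hm]
    exact ht
  calc (univ.filter fun t : E => t ^ m = c).card
      ≤ (Polynomial.nthRoots m c).toFinset.card := Finset.card_le_card h1
    _ ≤ Multiset.card (Polynomial.nthRoots m c) := Multiset.toFinset_card_le _
    _ ≤ m := Polynomial.card_nthRoots m c

lemma F_zero : F r E 0 = 1 := by
  have : (univ.filter fun t : E => t ^ (r+1) = 0) = {0} := by
    ext t
    simp [pow_eq_zero_iff (Nat.succ_ne_zero r)]
  rw [F, this, card_singleton]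

lemma F_eq_zero (hcard : Fintype.card E = r ^ 2) {c : E} (hc : c ∉ S r E) (hc0 : c ≠ 0) :
    F r E c = 0 := by
  rw [F, Finset.card_eq_zero, Finset.filter_eq_empty_iff]
  intro t _
  intro ht
  apply hc
  rw [mem_S]
  exact ⟨hc0, by rw [← ht]; exact norm_fixed hcard t⟩

lemma S_card_le (hr : 1 < r) : (S r E).card ≤ r - 1 := by
  have hsub : S r E ⊆ univ.filter fun c : E => c ^ (r-1) = 1 := by
    intro c hc
    rw [mem_S] at hc
    simp only [mem_filter, mem_univ, true_and]
    obtain ⟨hc0, hcr⟩ := hc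
    have : c ^ (r - 1) * c = 1 * c := by
      rw [one_mul, ← pow_succ]
      rwa [Nat.sub_add_cancel hr.le]
    exact mul_right_cancel₀ hc0 this
  exact (Finset.card_le_card hsub).trans (fiber_le (r-1) (by omega) 1)

lemma sum_F (hcard : Fintype.card E = r ^ 2) : ∑ c : E, F r E c = r ^ 2 := by
  rw [← hcard]
  exact (Finset.card_eq_sum_card_fiberwise
    (f := fun t : E => t ^ (r+1)) (fun a _ => mem_univ _)).symm ▸ rfl

lemma sum_insert_S (hcard : Fintype.card E = r ^ 2) (g : E → ℕ)
    (hg : ∀ c, c ∉ insert (0:E) (S r E) → g c = 0) :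
    ∑ c ∈ insert (0:E) (S r E), g c = ∑ c : E, g c := by
  apply Finset.sum_subset (Finset.subset_univ _)
  intro c _ hc
  exact hg c hc

lemma zero_not_mem_S : (0 : E) ∉ S r E := by
  rw [mem_S]; tauto

lemma sum_F_S (hcard : Fintype.card E = r ^ 2) :
    ∑ c ∈ S r E, F r E c = r ^ 2 - 1 := by
  have h1 : ∑ c ∈ insert (0:E) (S r E), F r E c = r ^ 2 := by
    rw [sum_insert_S hcard]
    · exact sum_F hcard
    · intro c hc
      simp only [Finset.mem_insert, not_or] at hc
      exact F_eq_zero hcard hc.2 hc.1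
  rw [Finset.sum_insert zero_not_mem_S, F_zero] at h1
  omega

lemma S_card (hr : 1 < r) (hcard : Fintype.card E = r ^ 2) : (S r E).card = r - 1 := by
  have h1 := sum_F_S (E := E) hcard
  have h2 : ∑ c ∈ S r E, F r E c ≤ (S r E).card * (r + 1) := by
    calc ∑ c ∈ S r E, F r E c ≤ ∑ _c ∈ S r E, (r+1) :=
          Finset.sum_le_sum fun c _ => fiber_le (r+1) (by omega) c
      _ = (S r E).card * (r + 1) := by rw [Finset.sum_const, smul_eq_mul]
  have h3 := S_card_le (E := E) hr
  have hr2 : r ^ 2 = r * r := sq r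
  nlinarith [Nat.sub_add_cancel hr.le, Nat.sub_add_cancel (show 1 ≤ r^2 by nlinarith)]

lemma F_S (hr : 1 < r) (hcard : Fintype.card E = r ^ 2) {c : E} (hc : c ∈ S r E) :
    F r E c = r + 1 := by
  by_contra hne
  have hlt : F r E c < r + 1 := lt_of_le_of_ne (fiber_le (r+1) (by omega) c) hne
  have h2 : ∑ b ∈ S r E, F r E b < ∑ _b ∈ S r E, (r+1) :=
    Finset.sum_lt_sum (fun b _ => fiber_le (r+1) (by omega) b) ⟨c, hc, hlt⟩
  rw [Finset.sum_const, smul_eq_mul, S_card hr hcard, sum_F_S hcard] at h2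
  have h5 : 1 ≤ r ^ 2 := Nat.one_le_pow _ _ (by omega)
  zify [h5, hr.le] at h2
  nlinarith [h2]

lemma exists_norm (hr : 1 < r) (hcard : Fintype.card E = r ^ 2) {c : E} (hc : c ∈ S r E) :
    ∃ t : E, t ^ (r+1) = c := by
  have h := F_S hr hcard hc
  have : (univ.filter fun t : E => t ^ (r+1) = c).Nonempty := by
    rw [← Finset.card_pos, ← F, h]; omega
  obtain ⟨t, ht⟩ := this
  exact ⟨t, (mem_filter.mp ht).2⟩

/-- Scaling symmetry: `N n a` is constant on `S`. -/
lemma N_const (hr : 1 < r) (hcard : Fintype.card E = r ^ 2) (n : ℕ) {a b : E}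
    (ha : a ∈ S r E) (hb : b ∈ S r E) : N r E n a = N r E n b := by
  rw [mem_S] at ha hb
  have hba : b * a⁻¹ ∈ S r E := by
    rw [mem_S]
    constructor
    · exact mul_ne_zero hb.1 (inv_ne_zero ha.1)
    · rw [mul_pow, hb.2, inv_pow, ha.2]
  obtain ⟨l, hl⟩ := exists_norm hr hcard hba
  have hl0 : l ≠ 0 := by
    intro h
    rw [h, zero_pow (Nat.succ_ne_zero r)] at hl
    exact (mem_S.mp hba).1 hl.symm
  unfold N
  apply Finset.card_bij (fun x _ => fun i => l * x i)
  · intro x hx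
    simp only [mem_filter, mem_univ, true_and] at hx ⊢
    have : ∑ i, (l * x i) ^ (r+1) = l ^ (r+1) * ∑ i, x i ^ (r+1) := by
      rw [Finset.mul_sum]
      exact Finset.sum_congr rfl fun i _ => mul_pow l (x i) (r+1)
    rw [this, hx, hl]
    exact inv_mul_cancel_right₀ ha.1 b
  · intro x hx y hy hxy
    funext i
    have := congrFun hxy i
    exact mul_left_cancel₀ hl0 this
  · intro y hy
    refine ⟨fun i => l⁻¹ * y i, ?_, ?_⟩
    · simp only [mem_filter, mem_univ, true_and] at hy ⊢
      have : ∑ i, (l⁻¹ * y i) ^ (r+1) = (l ^ (r+1))⁻¹ * ∑ i, y i ^ (r+1) := by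
        rw [Finset.mul_sum]
        exact Finset.sum_congr rfl fun i _ => by rw [mul_pow, inv_pow]
      rw [this, hy, hl]
      rw [mul_inv, inv_inv]
      rw [mul_comm b⁻¹ a, mul_assoc, inv_mul_cancel₀ hb.1, mul_one]
    · funext i
      simp [mul_inv_cancel_left₀ hl0]

lemma N_rec (n : ℕ) (a : E) :
    N r E (n+1) a = ∑ t : E, N r E n (a - t ^ (r+1)) := by
  unfold N
  rw [Finset.card_filter]
  have hsplit : ∑ x : Fin (n+1) → E, (if (∑ i, x i ^ (r+1)) = a then 1 else 0)
      = ∑ t : E, ∑ y : Fin n → E, (if (∑ i, (Fin.cons t y : Fin (n+1) → E) i ^ (r+1)) = a then (1:ℕ) else 0) :=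
    calc ∑ x : Fin (n+1) → E, (if (∑ i, x i ^ (r+1)) = a then (1:ℕ) else 0)
        = ∑ p : E × (Fin n → E), (if (∑ i, (Fin.cons p.1 p.2 : Fin (n+1) → E) i ^ (r+1)) = a then (1:ℕ) else 0) :=
          (Fintype.sum_equiv (Fin.consEquiv fun _ => E) _ _ fun p => rfl).symm
      _ = _ := Fintype.sum_prod_type _
  rw [hsplit]
  apply Finset.sum_congr rfl
  intro t _
  have hsum : ∀ y : Fin n → E,
      (∑ i, (Fin.cons t y : Fin (n+1) → E) i ^ (r+1)) = t ^ (r+1) + ∑ i, y i ^ (r+1) := by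
    intro y
    have : ∀ i : Fin (n+1), (Fin.cons t y : Fin (n+1) → E) i ^ (r+1)
        = (Fin.cons (t ^ (r+1)) (fun j => y j ^ (r+1)) : Fin (n+1) → E) i := by
      intro i
      refine Fin.cases ?_ ?_ i
      · simp
      · intro j; simp
    rw [Finset.sum_congr rfl fun i _ => this i]
    exact Fin.sum_cons _ _
  have hiff : ∀ y : Fin n → E,
      (t ^ (r+1) + ∑ i, y i ^ (r+1) = a) ↔ ((∑ i, y i ^ (r+1)) = a - t ^ (r+1)) := fun y => by
    rw [add_comm]; exact eq_sub_iff_add_eq.symm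
  simp_rw [hsum, hiff]
  rw [← Finset.card_filter]

lemma N_group (hr : 1 < r) (hcard : Fintype.card E = r ^ 2) (n : ℕ) (a : E) :
    ∑ t : E, N r E n (a - t ^ (r+1))
      = N r E n a + (r+1) * ∑ c ∈ S r E, N r E n (a - c) := by
  have h1 : ∑ t : E, N r E n (a - t^(r+1))
      = ∑ c : E, ∑ t ∈ univ.filter (fun t : E => t^(r+1) = c), N r E n (a - t^(r+1)) :=
    (Finset.sum_fiberwise_of_maps_to (fun t _ => mem_univ _) _).symm
  have h2 : ∀ c : E, ∑ t ∈ univ.filter (fun t : E => t^(r+1) = c), N r E n (a - t^(r+1))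
      = F r E c * N r E n (a - c) := by
    intro c
    rw [F, Finset.card_eq_sum_ones, Finset.sum_mul, one_mul]
    exact Finset.sum_congr rfl fun t ht => by rw [(mem_filter.mp ht).2]
  rw [h1]
  simp_rw [h2]
  rw [← sum_insert_S hcard (fun c => F r E c * N r E n (a - c))
    (fun c hc => by
      simp only [Finset.mem_insert, not_or] at hc
      show F r E c * N r E n (a - c) = 0
      rw [F_eq_zero hcard hc.2 hc.1, zero_mul])]
  rw [Finset.sum_insert zero_not_mem_S, F_zero, one_mul, sub_zero]
  congr 1
  rw [Finset.mul_sum]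
  exact Finset.sum_congr rfl fun c hc => by rw [F_S hr hcard hc]

lemma N_vanish (hcard : Fintype.card E = r ^ 2) (n : ℕ) {a : E}
    (h : a ∉ insert (0:E) (S r E)) : N r E n a = 0 := by
  simp only [Finset.mem_insert, not_or, mem_S] at h
  rw [N, Finset.card_eq_zero, Finset.filter_eq_empty_iff]
  intro x _ hx
  apply h.2
  refine ⟨h.1, ?_⟩
  rw [← hx, frob_sum hcard]
  exact Finset.sum_congr rfl fun i _ => norm_fixed hcard (x i)

lemma sum_N (hcard : Fintype.card E = r ^ 2) (n : ℕ) :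
    ∑ a : E, N r E n a = r ^ (2*n) := by
  have h1 : (Fintype.card (Fin n → E)) = ∑ a : E, N r E n a :=
    Finset.card_eq_sum_card_fiberwise (f := fun x : Fin n → E => ∑ i, x i ^ (r+1))
      (fun x _ => mem_univ _)
  rw [← h1, Fintype.card_fun, hcard, Fintype.card_fin, ← pow_mul, mul_comm 2 n, mul_comm n 2]

/-- Key induction in `ℤ`: `N n a · r = r^{2n} − (−1)^n r^n` for `a ∈ S`. -/
lemma key (hr : 1 < r) (hcard : Fintype.card E = r ^ 2) :
    ∀ n : ℕ, ∀ a : E, a ∈ S r E →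
      (N r E n a : ℤ) * r = (r:ℤ)^(2*n) - (-1)^n * (r:ℤ)^n := by
  intro n
  induction n with
  | zero =>
    intro a ha
    have h0 : N r E 0 a = 0 := by
      rw [N, Finset.card_eq_zero, Finset.filter_eq_empty_iff]
      intro x _
      rw [Finset.univ_eq_empty, Finset.sum_empty]
      exact fun h => (mem_S.mp ha).1 h.symm
    rw [h0]; simp
  | succ n ih =>
    intro a ha
    set R : ℤ := (r : ℤ) with hR
    set A : ℤ := R ^ (2*n) with hA
    set B : ℤ := R ^ n with hB
    set e : ℤ := (-1 : ℤ) ^ n with he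
    have hRpos : (0:ℤ) < R := by rw [hR]; exact_mod_cast Nat.zero_lt_of_lt hr
    -- values of N n on S
    have hval : ∀ b : E, b ∈ S r E → (N r E n b : ℤ) * R = A - e * B := fun b hb => ih b hb
    -- N n 0
    have hzero : (N r E n 0 : ℤ) * R = A * R - ((R - 1) * (A - e * B)) := by
      have hsplit : N r E n 0 + ∑ b ∈ S r E, N r E n b = r ^ (2*n) := by
        rw [← sum_N hcard n, ← sum_insert_S hcard _ (fun b hb => N_vanish hcard n hb),
          Finset.sum_insert zero_not_mem_S]
      have hcast : (N r E n 0 : ℤ) + ∑ b ∈ S r E, (N r E n b : ℤ) = A := by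
        rw [hA, hR]
        exact_mod_cast hsplit
      have hsum : (∑ b ∈ S r E, (N r E n b : ℤ)) * R = (R - 1) * (A - e * B) := by
        rw [Finset.sum_mul]
        rw [Finset.sum_congr rfl hval, Finset.sum_const, S_card hr hcard]
        have : ((r - 1 : ℕ) : ℤ) = R - 1 := by
          rw [hR]; push_cast [Nat.cast_sub hr.le]; ring
        rw [nsmul_eq_mul, this]
      have := congrArg (· * R) hcast
      simp only [add_mul] at this
      rw [hsum] at this
      linarith
    -- the sum over S.erase a
    have ha' := mem_S.mp ha
    have herase : ∀ c ∈ (S r E).erase a, a - c ∈ S r E := by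
      intro c hc
      obtain ⟨hca, hcS⟩ := Finset.mem_erase.mp hc
      rw [mem_S] at hcS ⊢
      refine ⟨sub_ne_zero.mpr (fun h => hca (h.symm ▸ rfl)), ?_⟩
      rw [frob_sub hcard, ha'.2, hcS.2]
    have herase_card : ((S r E).erase a).card = r - 2 := by
      rw [Finset.card_erase_of_mem ha, S_card hr hcard]
      omega
    have hES : (∑ c ∈ (S r E).erase a, (N r E n (a - c) : ℤ)) * R
        = (R - 2) * (A - e * B) := by
      rw [Finset.sum_mul, Finset.sum_congr rfl (fun c hc => hval _ (herase c hc)),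
        Finset.sum_const, herase_card, nsmul_eq_mul]
      congr 1
      rw [hR]
      push_cast [Nat.cast_sub (show 2 ≤ r from hr)]
      ring
    -- the recursion
    have hrec : (N r E (n+1) a : ℤ)
        = (N r E n a : ℤ) + (R + 1) * ((N r E n 0 : ℤ)
            + ∑ c ∈ (S r E).erase a, (N r E n (a - c) : ℤ)) := by
      have h1 : N r E (n+1) a = N r E n a + (r+1) * ∑ c ∈ S r E, N r E n (a - c) := by
        rw [N_rec, N_group hr hcard]
      have h2 : ∑ c ∈ S r E, N r E n (a - c)
          = N r E n 0 + ∑ c ∈ (S r E).erase a, N r E n (a - c) := by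
        rw [← Finset.insert_erase ha, Finset.sum_insert (Finset.notMem_erase a _),
          sub_self, Finset.insert_erase ha]
      rw [h1, h2, hR]
      push_cast
      ring
    -- put it together
    have hmul : (N r E (n+1) a : ℤ) * R
        = (N r E n a : ℤ) * R + (R + 1) * ((N r E n 0 : ℤ) * R
            + (∑ c ∈ (S r E).erase a, (N r E n (a - c) : ℤ)) * R) := by
      rw [hrec]; ring
    rw [hmul, hval a ha, hzero, hES]
    have e1 : (R:ℤ)^(2*(n+1)) = A * R^2 := by
      rw [hA, ← pow_add, show 2*n+2 = 2*(n+1) from by ring]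
    have e2 : ((-1:ℤ))^(n+1) = -e := by rw [he, pow_succ]; ring
    have e3 : (R:ℤ)^(n+1) = B * R := by rw [hB, pow_succ]
    rw [e1, e2, e3]
    ring

end Stmt7

/-- Let `E = F_{q^b}` with `q^b = r^2` a square (`r = q^{b/2}`), and on `V' = E^n`
(`n` odd) consider the Hermitian form `H'(x) = Σ_i x_i·x_i^r`, with values in the
subfield `F_r = {a : a^r = a}`.  For every `a ∈ F_r^*`, the number of `x ∈ V'` with
`H'(x) = a` equals `r^{n-1}(r^n + 1) = q^{(bn-b)/2}(q^{bn/2}+1)`. -/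
theorem stmt7 (E : Type*) [Field E] [Fintype E] [DecidableEq E]
    (r n : ℕ) (hr : 1 < r) (hcard : Fintype.card E = r ^ 2)
    (hn : Odd n)
    (a : E) (ha : a ≠ 0) (haF : a ^ r = a) :
    (Finset.univ.filter fun x : Fin n → E => (∑ i, x i * x i ^ r) = a).card
      = r ^ (n - 1) * (r ^ n + 1) := by
  have hpred : ∀ x : E, x * x ^ r = x ^ (r+1) := fun x => by rw [pow_succ]; ring
  have hNeq : (Finset.univ.filter fun x : Fin n → E => (∑ i, x i * x i ^ r) = a).card
      = Stmt7.N r E n a := by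
    unfold Stmt7.N
    congr 1
    ext x
    simp_rw [hpred]
  rw [hNeq]
  have haS : a ∈ Stmt7.S r E := Stmt7.mem_S.mpr ⟨ha, haF⟩
  have hkey := Stmt7.key hr hcard n a haS
  rw [Odd.neg_one_pow hn] at hkey
  have hn1 : 1 ≤ n := hn.pos
  have hr0 : (r : ℤ) ≠ 0 := by positivity
  apply @Nat.cast_injective ℤ
  apply mul_right_cancel₀ hr0
  rw [hkey]
  push_cast
  rw [show (2:ℕ)*n = n + n by ring, pow_add]
  have hx : ((r:ℤ) ^ (n-1)) * (r:ℤ) = (r:ℤ)^n := by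
    rw [← pow_succ, Nat.sub_add_cancel hn1]
  linear_combination (-((r:ℤ)^n + 1)) * hx
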